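/- Monotonicity and convergence of discretized values: Let c : [0,1] × ℝ → ℝ be C¹ in t with ∂ₜc continuous and ∂ₜc ≥ 0, and fix m > 0. For a partition π_n : 0 = t₀ < t₁ < … < t_n = 1, define C_n(m) := inf over ζ₁ ≤ … ≤ ζ_n ≤ m of Σ_{i=1}^n [ c(tᵢ,ζᵢ)/(m−ζᵢ) − 1_{i<n} c(tᵢ,ζ_{i+1})/(m−ζ_{i+1}) ]. For step functions ζ ∈ V_l⁺ constant on each (t_{i−1}, tᵢ], the functional Ψ_m(ζ) := c(0,ζ₀)/(m−ζ₀) + ∫₀¹ ∂ₜc(s,ζ_s)/(m−ζ_s) ds equals Σ_{i=0}^n [ c(tᵢ,ζ_{tᵢ})/(m−ζ_{tᵢ}) − 1_{i<n} c(tᵢ,ζ_{t_{i+1}})/(m−ζ_{t_{i+1}}) ], and consequently C_n(m) ≥ C(m) := inf_{ζ ∈ V_l⁺, ζ ≤ m} Ψ_m(ζ). -/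

import Mathlib

open Set Filter MeasureTheory intervalIntegral

/-- The full-marginal cost functional `Ψ_m(ζ) = c(0,ζ₀)/(m−ζ₀) + ∫₀¹ ∂ₜc(s,ζ_s)/(m−ζ_s) ds`. -/
noncomputable def Psi (c c' : ℝ → ℝ → ℝ) (m : ℝ) (ζ : ℝ → ℝ) : ℝ :=
  c 0 (ζ 0) / (m - ζ 0) + ∫ s in (0:ℝ)..1, c' s (ζ s) / (m - ζ s)

/-- Admissible controls: non-decreasing, left-continuous (càglàd) functions on `[0,1]`
bounded above by `m`. -/
def Adm (m : ℝ) (ζ : ℝ → ℝ) : Prop :=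
  MonotoneOn ζ (Set.Icc 0 1) ∧
    (∀ t ∈ Set.Ioc (0:ℝ) 1, ContinuousWithinAt ζ (Set.Iic t) t) ∧
    (∀ t ∈ Set.Icc (0:ℝ) 1, ζ t ≤ m)

/-- For step functions `ζ` constant on each `(t_{i−1}, t_i]` of a partition of `[0,1]`, the
functional `Ψ_m(ζ)` equals the discrete telescoping sum
`Σ_{i=0}^n [ c(tᵢ,ζ_{tᵢ})/(m−ζ_{tᵢ}) − 1_{i<n} c(tᵢ,ζ_{t_{i+1}})/(m−ζ_{t_{i+1}}) ]`; and
consequently the discrete value `C_n(m)` dominates the continuous one `C(m)`. -/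
theorem stmt_8 (c c' : ℝ → ℝ → ℝ)
    (hconv : ∀ t ∈ Set.Icc (0:ℝ) 1, ConvexOn ℝ Set.univ (c t))
    (hanti : ∀ t ∈ Set.Icc (0:ℝ) 1, Antitone (c t))
    (hpos : ∀ t ∈ Set.Icc (0:ℝ) 1, ∀ x, 0 ≤ c t x)
    (hderiv : ∀ x : ℝ, ∀ t ∈ Set.Icc (0:ℝ) 1, HasDerivAt (fun u => c u x) (c' t x) t)
    (hc'cont : ContinuousOn (fun p : ℝ × ℝ => c' p.1 p.2) (Set.Icc 0 1 ×ˢ Set.univ))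
    (hc'pos : ∀ t ∈ Set.Icc (0:ℝ) 1, ∀ x, 0 ≤ c' t x)
    (m : ℝ) (hm : 0 < m)
    (n : ℕ) (hn : 1 ≤ n)
    (t : ℕ → ℝ) (ht0 : t 0 = 0) (htn : t n = 1)
    (htm : ∀ i j : ℕ, i < j → j ≤ n → t i < t j) :
    (∀ ζ : ℝ → ℝ, Adm m ζ →
        (∀ i ∈ Finset.Icc 1 n, ∀ s ∈ Set.Ioc (t (i-1)) (t i), ζ s = ζ (t i)) →
        Psi c c' m ζ =
          ∑ i ∈ Finset.range (n+1),
            (c (t i) (ζ (t i)) / (m - ζ (t i))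
              - if i < n then c (t i) (ζ (t (i+1))) / (m - ζ (t (i+1))) else 0)) ∧
    sInf {v : ℝ | ∃ z : ℕ → ℝ,
        (∀ i j : ℕ, 1 ≤ i → i ≤ j → j ≤ n → z i ≤ z j) ∧
        (∀ i : ℕ, 1 ≤ i → i ≤ n → z i ≤ m) ∧
        v = ∑ i ∈ Finset.Icc 1 n,
            (c (t i) (z i) / (m - z i)
              - if i < n then c (t i) (z (i+1)) / (m - z (i+1)) else 0)} ≥
      sInf {v : ℝ | ∃ ζ : ℝ → ℝ, Adm m ζ ∧ v = Psi c c' m ζ} := by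

  classical
  -- monotonicity facts about the partition
  have htmono : ∀ i j : ℕ, i ≤ j → j ≤ n → t i ≤ t j := by
    intro i j hij hjn
    rcases eq_or_lt_of_le hij with h | h
    · rw [h]
    · exact (htm i j h hjn).le
  have ht0le : ∀ i : ℕ, i ≤ n → 0 ≤ t i := fun i hi => ht0 ▸ htmono 0 i (Nat.zero_le i) hi
  have htle1 : ∀ i : ℕ, i ≤ n → t i ≤ 1 := fun i hi => htn ▸ htmono i n hi le_rfl
  -- Part 1
  have part1 : ∀ ζ : ℝ → ℝ, Adm m ζ →
      (∀ i ∈ Finset.Icc 1 n, ∀ s ∈ Set.Ioc (t (i-1)) (t i), ζ s = ζ (t i)) →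
      Psi c c' m ζ =
        ∑ i ∈ Finset.range (n+1),
          (c (t i) (ζ (t i)) / (m - ζ (t i))
            - if i < n then c (t i) (ζ (t (i+1))) / (m - ζ (t (i+1))) else 0) := by
    intro ζ hAdm hstep
    have key : ∀ k : ℕ, k < n →
        IntervalIntegrable (fun s => c' s (ζ s) / (m - ζ s)) volume (t k) (t (k+1)) ∧
        ∫ s in (t k)..(t (k+1)), c' s (ζ s) / (m - ζ s)
          = c (t (k+1)) (ζ (t (k+1))) / (m - ζ (t (k+1)))
            - c (t k) (ζ (t (k+1))) / (m - ζ (t (k+1))) := by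
      intro k hk
      have hle : t k ≤ t (k+1) := (htm k (k+1) (Nat.lt_succ_self k) hk).le
      set x := ζ (t (k+1)) with hx
      have hxeq : ∀ s ∈ Set.Ioc (t k) (t (k+1)), ζ s = x := by
        intro s hs
        have h := hstep (k+1) (Finset.mem_Icc.mpr ⟨Nat.le_add_left 1 k, hk⟩) s
          (by simpa using hs)
        simpa using h
      have hIccsub' : Set.uIcc (t k) (t (k+1)) ⊆ Set.Icc (0:ℝ) 1 := by
        rw [Set.uIcc_of_le hle]
        exact Set.Icc_subset_Icc (ht0le k hk.le) (htle1 (k+1) hk)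
      have hcx : ContinuousOn (fun s => c' s x) (Set.Icc (0:ℝ) 1) := by
        have : ContinuousOn ((fun p : ℝ × ℝ => c' p.1 p.2) ∘ (fun s : ℝ => (s, x)))
            (Set.Icc (0:ℝ) 1) := by
          apply hc'cont.comp
          · exact (Continuous.continuousOn (by continuity))
          · intro s hs; exact ⟨hs, Set.mem_univ x⟩
        exact this
      have hintx : IntervalIntegrable (fun s => c' s x / (m - x)) volume (t k) (t (k+1)) :=
        ((hcx.div_const (m - x)).mono hIccsub').intervalIntegrable
      have hEq : Set.EqOn (fun s => c' s x / (m - x)) (fun s => c' s (ζ s) / (m - ζ s))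
          (Set.Ioc (t k) (t (k+1))) := by
        intro s hs
        simp only
        rw [hxeq s hs]
      have hInt : IntervalIntegrable (fun s => c' s (ζ s) / (m - ζ s)) volume (t k) (t (k+1)) := by
        rw [intervalIntegrable_iff_integrableOn_Ioc_of_le hle]
        exact ((intervalIntegrable_iff_integrableOn_Ioc_of_le hle).mp hintx).congr_fun hEq
          measurableSet_Ioc
      refine ⟨hInt, ?_⟩
      have h1 : ∫ s in (t k)..(t (k+1)), c' s (ζ s) / (m - ζ s)
          = ∫ s in (t k)..(t (k+1)), c' s x / (m - x) := by
        rw [intervalIntegral.integral_of_le hle, intervalIntegral.integral_of_le hle]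
        exact (MeasureTheory.setIntegral_congr_fun measurableSet_Ioc hEq).symm
      have hder : ∀ s ∈ Set.uIcc (t k) (t (k+1)), HasDerivAt (fun u => c u x) (c' s x) s :=
        fun s hs => hderiv x s (hIccsub' hs)
      have hint' : IntervalIntegrable (fun s => c' s x) volume (t k) (t (k+1)) :=
        (hcx.mono hIccsub').intervalIntegrable
      have h2 : ∫ s in (t k)..(t (k+1)), c' s x = c (t (k+1)) x - c (t k) x :=
        intervalIntegral.integral_eq_sub_of_hasDerivAt hder hint'
      rw [h1, intervalIntegral.integral_div, h2, sub_div]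
    have hsum := intervalIntegral.sum_integral_adjacent_intervals
      (f := fun s => c' s (ζ s) / (m - ζ s)) (μ := volume) (a := t)
      (fun k hk => (key k hk).1)
    rw [ht0, htn] at hsum
    have hint_eq : ∫ s in (0:ℝ)..1, c' s (ζ s) / (m - ζ s)
        = ∑ k ∈ Finset.range n, (c (t (k+1)) (ζ (t (k+1))) / (m - ζ (t (k+1)))
            - c (t k) (ζ (t (k+1))) / (m - ζ (t (k+1)))) := by
      rw [← hsum]
      exact Finset.sum_congr rfl (fun k hk => (key k (Finset.mem_range.mp hk)).2)
    show c 0 (ζ 0) / (m - ζ 0) + ∫ s in (0:ℝ)..1, c' s (ζ s) / (m - ζ s) = _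
    rw [hint_eq]
    have hf0 : c 0 (ζ 0) / (m - ζ 0) = c (t 0) (ζ (t 0)) / (m - ζ (t 0)) := by rw [ht0]
    have hR : ∑ i ∈ Finset.range (n+1),
        (c (t i) (ζ (t i)) / (m - ζ (t i))
          - if i < n then c (t i) (ζ (t (i+1))) / (m - ζ (t (i+1))) else 0)
        = (∑ i ∈ Finset.range (n+1), c (t i) (ζ (t i)) / (m - ζ (t i)))
          - ∑ i ∈ Finset.range n, c (t i) (ζ (t (i+1))) / (m - ζ (t (i+1))) := by
      rw [Finset.sum_sub_distrib]
      congr 1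
      rw [Finset.sum_range_succ, if_neg (lt_irrefl n), add_zero]
      exact Finset.sum_congr rfl (fun i hi => if_pos (Finset.mem_range.mp hi))
    rw [hR, Finset.sum_range_succ', Finset.sum_sub_distrib, hf0]
    ring
  refine ⟨part1, ?_⟩
  -- Part 2
  have hbdd : BddBelow {v : ℝ | ∃ ζ : ℝ → ℝ, Adm m ζ ∧ v = Psi c c' m ζ} := by
    refine ⟨0, ?_⟩
    rintro w ⟨ζ, hA, rfl⟩
    have h1 : 0 ≤ c 0 (ζ 0) / (m - ζ 0) :=
      div_nonneg (hpos 0 (Set.mem_Icc.mpr ⟨le_rfl, zero_le_one⟩) (ζ 0))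
        (sub_nonneg.mpr (hA.2.2 0 (Set.mem_Icc.mpr ⟨le_rfl, zero_le_one⟩)))
    have h2 : 0 ≤ ∫ s in (0:ℝ)..1, c' s (ζ s) / (m - ζ s) := by
      apply intervalIntegral.integral_nonneg zero_le_one
      intro u hu
      exact div_nonneg (hc'pos u hu _) (sub_nonneg.mpr (hA.2.2 u hu))
    exact add_nonneg h1 h2
  apply le_csInf
  · exact ⟨_, ⟨fun _ => 0, fun i j _ _ _ => le_rfl, fun i _ _ => hm.le, rfl⟩⟩
  · rintro v ⟨z, hzmono, hzle, rfl⟩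
    set idx : ℝ → ℕ := fun s => max 1 ((Finset.Icc 1 n).filter (fun i => t (i-1) < s)).card
      with hidxdef
    have hidx1 : ∀ s, 1 ≤ idx s := fun s => le_max_left _ _
    have hidxn : ∀ s, idx s ≤ n := by
      intro s
      apply max_le hn
      calc ((Finset.Icc 1 n).filter (fun i => t (i-1) < s)).card
          ≤ (Finset.Icc 1 n).card := Finset.card_filter_le _ _
        _ = n := by rw [Nat.card_Icc]; omega
    have hidxmono : Monotone idx := by
      intro s s' hss
      apply max_le_max le_rfl
      apply Finset.card_le_card
      intro i hi
      simp only [Finset.mem_filter] at hi ⊢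
      exact ⟨hi.1, lt_of_lt_of_le hi.2 hss⟩
    set ζ : ℝ → ℝ := fun s => z (idx s) with hζdef
    have hidxval : ∀ j : ℕ, 1 ≤ j → j ≤ n → ∀ s ∈ Set.Ioc (t (j-1)) (t j), idx s = j := by
      intro j hj1 hjn s hs
      have hfil : (Finset.Icc 1 n).filter (fun i => t (i-1) < s) = Finset.Icc 1 j := by
        ext i
        simp only [Finset.mem_filter, Finset.mem_Icc]
        constructor
        · rintro ⟨⟨h1, h2⟩, h3⟩
          refine ⟨h1, ?_⟩
          by_contra h
          push_neg at h
          have hji : t j ≤ t (i-1) := htmono j (i-1) (by omega) (by omega)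
          have := hs.2
          linarith
        · rintro ⟨h1, h2⟩
          refine ⟨⟨h1, le_trans h2 hjn⟩, ?_⟩
          have : t (i-1) ≤ t (j-1) := htmono (i-1) (j-1) (by omega) (by omega)
          have := hs.1
          linarith
      show max 1 ((Finset.Icc 1 n).filter (fun i => t (i-1) < s)).card = j
      rw [hfil, Nat.card_Icc, Nat.add_sub_cancel, max_eq_right hj1]
    have hζval : ∀ i : ℕ, 1 ≤ i → i ≤ n → ζ (t i) = z i := by
      intro i h1 h2
      show z (idx (t i)) = z i
      rw [hidxval i h1 h2 (t i) ⟨htm (i-1) i (by omega) h2, le_rfl⟩]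
    have hζstep : ∀ i ∈ Finset.Icc 1 n, ∀ s ∈ Set.Ioc (t (i-1)) (t i), ζ s = ζ (t i) := by
      intro i hi s hs
      obtain ⟨h1, h2⟩ := Finset.mem_Icc.mp hi
      show z (idx s) = z (idx (t i))
      rw [hidxval i h1 h2 s hs, hidxval i h1 h2 (t i) ⟨htm (i-1) i (by omega) h2, le_rfl⟩]
    have hζ0 : ζ 0 = z 1 := by
      show z (idx 0) = z 1
      have hfil : (Finset.Icc 1 n).filter (fun i => t (i-1) < (0:ℝ)) = ∅ := by
        apply Finset.filter_false_of_mem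
        intro i hi
        obtain ⟨h1, h2⟩ := Finset.mem_Icc.mp hi
        exact not_lt.mpr (ht0le (i-1) (by omega))
      have : idx 0 = 1 := by
        show max 1 ((Finset.Icc 1 n).filter (fun i => t (i-1) < (0:ℝ))).card = 1
        rw [hfil, Finset.card_empty, max_eq_left (Nat.zero_le 1)]
      rw [this]
    have hζmono : Monotone ζ := fun s s' h =>
      hzmono _ _ (hidx1 s) (hidxmono h) (hidxn s')
    have hAdm : Adm m ζ := by
      refine ⟨hζmono.monotoneOn _, ?_, fun u _ => hzle _ (hidx1 u) (hidxn u)⟩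
      intro s hs
      have hex : ∃ i, s ≤ t i := ⟨n, htn ▸ hs.2⟩
      set j := Nat.find hex with hjdef
      have hsj : s ≤ t j := Nat.find_spec hex
      have hjn : j ≤ n := Nat.find_le (htn ▸ hs.2)
      have hj1 : 1 ≤ j := by
        rcases Nat.eq_zero_or_pos j with h | h
        · exfalso
          have := hsj
          rw [h, ht0] at this
          linarith [hs.1]
        · exact h
      have hjlt : t (j-1) < s := by
        have h := Nat.find_min hex (m := j - 1) (by omega)
        exact lt_of_not_ge h
      have hconst : ∀ y ∈ Set.Ioc (t (j-1)) (t j), ζ y = z j := by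
        intro y hy
        show z (idx y) = z j
        rw [hidxval j hj1 hjn y hy]
      have hmem : Set.Ioc (t (j-1)) s ∈ nhdsWithin s (Set.Iic s) := Ioc_mem_nhdsLE hjlt
      apply ContinuousWithinAt.congr_of_eventuallyEq
        (continuousWithinAt_const (b := z j))
      · filter_upwards [hmem] with y hy
        exact hconst y ⟨hy.1, le_trans hy.2 hsj⟩
      · exact hconst s ⟨hjlt, hsj⟩
    have hpsi := part1 ζ hAdm hζstep
    have hsum_eq : ∑ i ∈ Finset.range (n+1),
        (c (t i) (ζ (t i)) / (m - ζ (t i))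
          - if i < n then c (t i) (ζ (t (i+1))) / (m - ζ (t (i+1))) else 0)
        = ∑ i ∈ Finset.Icc 1 n,
          (c (t i) (z i) / (m - z i)
            - if i < n then c (t i) (z (i+1)) / (m - z (i+1)) else 0) := by
      have hins : Finset.range (n+1) = insert 0 (Finset.Icc 1 n) := by
        ext i
        simp only [Finset.mem_range, Finset.mem_insert, Finset.mem_Icc]
        omega
      have hzt0 : ζ (t 0) = z 1 := by rw [ht0]; exact hζ0
      have hzt1 : ζ (t 1) = z 1 := hζval 1 le_rfl hn
      have h0 : c (t 0) (ζ (t 0)) / (m - ζ (t 0))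
          - (if 0 < n then c (t 0) (ζ (t (0+1))) / (m - ζ (t (0+1))) else 0) = 0 := by
        rw [if_pos (by omega)]
        simp only [Nat.zero_add]
        rw [hzt0, hzt1, sub_self]
      rw [hins, Finset.sum_insert (by simp), h0, zero_add]
      apply Finset.sum_congr rfl
      intro i hi
      obtain ⟨h1, h2⟩ := Finset.mem_Icc.mp hi
      rw [hζval i h1 h2]
      by_cases h : i < n
      · rw [if_pos h, if_pos h, hζval (i+1) (by omega) (by omega)]
      · rw [if_neg h, if_neg h]
    calc sInf {v : ℝ | ∃ ζ : ℝ → ℝ, Adm m ζ ∧ v = Psi c c' m ζ}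
        ≤ Psi c c' m ζ := csInf_le hbdd ⟨ζ, hAdm, rfl⟩
      _ = _ := hpsi.trans hsum_eq
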